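/- The only solutions (n, m, a) in nonnegative integers with n ≥ m of the exponential Diophantine equation L_n + L_m = 3^a are (n, m, a) = (1, 0, 1) and (n, m, a) = (4, 0, 2); that is, L_1 + L_0 = 3 and L_4 + L_0 = 9. -/

import Mathlib

set_option maxRecDepth 1000000
set_option maxHeartbeats 1000000

/-- The Lucas sequence: `L 0 = 2`, `L 1 = 1`, `L (n+2) = L (n+1) + L n`. -/
def lucas : ℕ → ℕ
  | 0 => 2
  | 1 => 1
  | n + 2 => lucas (n + 1) + lucas n

/-- Base-128 digit `i` of `K`. -/
def dg (K i : ℕ) : ℕ := (K >>> (7 * i)) % 128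

def K27 : ℕ := 6819301149703287724799888341219834859300301136975747607634856574769001402786658547381973158928750309372387406977597851082937570053923193625076098861678722
def K107 : ℕ := 6852037053823269599128000666671787518047472552308822280129131413918174253107868347232159375842855195962239201731194191517641624808387129942565738743120002
def K41 : ℕ := 51354182367025267658773568288074376014193832089473229109430521630507075183885383953990081359845065166957136862101129465360048588391218788181544880192587669707499447329177151089881125358113747328508924497050939278044821939365428863821018988659509321847229793277795090379720729260928339011724238168601036294252483160637461371150746471535739318983830856410697679103429646537574319078505711160434288745757804741001556570874481914467497440295127835699016170962415861490535355603608982139531601727449179250453120779991811425650193578008479929452671390286475138901306340733503751915469744699089201549110806536761766567133826024270155966715786626939948091343749615058625581200818555569376372791462262465127951681607090505125153398517637626416791773164541426532343660674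
def K61 : ℕ := 51415761788897738283968130618354784617764662672016050487494554693251488729102671393874944189187906984409119801745353650577382059487161260138771658195107732625164899146963423463252513336036898347561298350373557617064215655781869077604541650441475948839780731702664676278366507419277722955142803202430196362884621713769299598267121855996943302435089550236750420385812648500750402744896724833075470520120027519954091612393409381234063703480334733326094618680107650617681365118766736334282264642345565047717898778034080434155963520039390243454667953399628898160140967433364038650966287381304361326914639973448643470633027794588220884553847128787483308234305993820018570506039686582023310481201343854381709094106027044885496959372167196201384298209066757350884425858
/-- Mask of values `3 ^ t % 107`. -/
def M107 : ℕ := 50079290986288516948354744811034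
/-- Mask of surviving pairs `(i, j)` mod 72 of the first sieve stage. -/
def SM : ℕ := 63063750349534368803387319757020428998879424441384963556222061429367804203785286767108037857955036118297753148707259821925180465148882623824198957927581325716553283742174869926469177640280343586206380419641160368332422355220106320907400907459428762908038093166138655590202974984413530957401365315286570804822931279250064205341422266678325954914980870271809373808338281816598654748744743216597020325367628674723200737417464379925141963422834602902328225432313540567640458841219684785915151034098248995087980135476576973705011894856085537569563881929599707393706374975355149874495007037219987055770643568818815470294361670862265321594818522512401115673429862135215462503567879648623024613980860511739100135873428038722005882376877513733047514384289371260424735833895737119503224481383062297233749703257924251634095133936432157691467735163209007723759622921092571868175544634746543719594974103511283393010752363256377472619199428657874013908620146196388663724859499232249034814053692151608369307598456654208116671028279280591041406454430333908286136246849751212495819251454250917132350928506038442197131387302704537193828520466721508963395816169224235572899417484210949723821797406081539281905735030781572294640498468608824374258409752760587050447530690696564031207948899057368597634886208297055731027049467014947105306472807367115047182358419475952825708222797620557598128880902301871483111981647203930112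

/-- Bounded `∀` on `ℕ`, as a `Bool`, by plain `Nat.rec`. -/
def allB (f : ℕ → Bool) (n : ℕ) : Bool := Nat.rec true (fun k ih => f k && ih) n

def bit (m s : ℕ) : Bool := (m >>> s) % 2 == 1

lemma allB_spec (f : ℕ → Bool) : ∀ n, allB f n = true → ∀ i, i < n → f i = true := by
  intro n
  induction n with
  | zero => intro _ i hi; omega
  | succ k ih =>
    intro h i hi
    have h' : (f k && allB f k) = true := h
    rw [Bool.and_eq_true] at h'
    rcases Nat.lt_succ_iff_lt_or_eq.mp hi with h2 | rfl
    · exact ih h'.2 i h2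
    · exact h'.1

/-- From verified base cases and recurrence of a digit table,
`lucas i % q` equals the table entry, for `i ≤ P + 1`. -/
lemma lucas_mod_eq_dg (q K P : ℕ)
    (h0 : dg K 0 = 2 % q) (h1 : dg K 1 = 1 % q)
    (hrec : ∀ i < P, dg K (i + 2) = (dg K (i + 1) + dg K i) % q) :
    ∀ i ≤ P + 1, lucas i % q = dg K i := by
  intro i
  induction i using Nat.strong_induction_on with
  | _ i ih =>
    match i with
    | 0 => intro _; simp [lucas, h0]
    | 1 => intro _; simp [lucas, h1]
    | (j + 2) =>
      intro hle
      have hr := hrec j (by omega)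
      have e1 := ih (j + 1) (by omega) (by omega)
      have e2 := ih j (by omega) (by omega)
      have : lucas (j + 2) = lucas (j + 1) + lucas j := by simp [lucas]
      rw [this, Nat.add_mod, e1, e2, ← hr]

/-- Periodicity of `lucas` mod `q` with period `P`, given table data. -/
lemma lucas_mod_period (q K P : ℕ) (hP : 2 ≤ P)
    (h0 : dg K 0 = 2 % q) (h1 : dg K 1 = 1 % q)
    (hrec : ∀ i < P, dg K (i + 2) = (dg K (i + 1) + dg K i) % q)
    (hP0 : dg K P = 2 % q) (hP1 : dg K (P + 1) = 1 % q) :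
    ∀ n, lucas (n + P) % q = lucas n % q := by
  have tab := lucas_mod_eq_dg q K P h0 h1 hrec
  intro n
  induction n using Nat.strong_induction_on with
  | _ n ih =>
    match n with
    | 0 =>
      have ht := tab P (by omega)
      have hl0 : lucas 0 = 2 := rfl
      show lucas (0 + P) % q = lucas 0 % q
      rw [Nat.zero_add, ht, hP0, hl0]
    | 1 =>
      have ht := tab (P + 1) (by omega)
      have hl1 : lucas 1 = 1 := rfl
      show lucas (1 + P) % q = lucas 1 % q
      rw [Nat.add_comm 1 P, ht, hP1, hl1]
    | (j + 2) =>
      have e1 := ih (j + 1) (by omega)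
      have e2 := ih j (by omega)
      have l1 : lucas (j + 2 + P) = lucas (j + 1 + P) + lucas (j + P) := by
        have : j + 2 + P = (j + P) + 2 := by omega
        rw [this]
        have h2 : lucas ((j + P) + 2) = lucas ((j + P) + 1) + lucas (j + P) := by
          simp [lucas]
        rw [h2]
        congr 2
        omega
      have l2 : lucas (j + 2) = lucas (j + 1) + lucas j := by simp [lucas]
      rw [l1, l2, Nat.add_mod, e1, e2, ← Nat.add_mod]

lemma lucas_mod_reduce (q K P : ℕ) (hP : 2 ≤ P)
    (h0 : dg K 0 = 2 % q) (h1 : dg K 1 = 1 % q)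
    (hrec : ∀ i < P, dg K (i + 2) = (dg K (i + 1) + dg K i) % q)
    (hP0 : dg K P = 2 % q) (hP1 : dg K (P + 1) = 1 % q) :
    ∀ n, lucas n % q = dg K (n % P) := by
  have per := lucas_mod_period q K P hP h0 h1 hrec hP0 hP1
  have tab := lucas_mod_eq_dg q K P h0 h1 hrec
  have key : ∀ k r, lucas (r + P * k) % q = lucas r % q := by
    intro k
    induction k with
    | zero => intro r; rfl
    | succ t iht =>
      intro r
      have : r + P * (t + 1) = (r + P * t) + P := by ring
      rw [this, per, iht]
  intro n
  have h2 := key (n / P) (n % P)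
  rw [Nat.mod_add_div n P] at h2
  have hlt : n % P < P := Nat.mod_lt _ (by omega)
  rw [h2, tab _ (by omega)]

lemma pow_mod_red (q d : ℕ) (hq : 3 ^ d % q = 1 % q) (hd : 0 < d) (a : ℕ) :
    3 ^ a % q = 3 ^ (a % d) % q := by
  conv_lhs => rw [← Nat.div_add_mod a d]
  rw [pow_add, pow_mul, Nat.mul_mod, Nat.pow_mod, hq, ← Nat.pow_mod,
    one_pow, ← Nat.mul_mod, one_mul]

lemma dg_rec27 : ∀ i < 72, dg K27 (i + 2) = (dg K27 (i + 1) + dg K27 i) % 27 := by decide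
lemma dg_rec107 : ∀ i < 72, dg K107 (i + 2) = (dg K107 (i + 1) + dg K107 i) % 107 := by decide
lemma dg_rec41 : ∀ i < 360, dg K41 (i + 2) = (dg K41 (i + 1) + dg K41 i) % 41 := by decide
lemma dg_rec61 : ∀ i < 360, dg K61 (i + 2) = (dg K61 (i + 1) + dg K61 i) % 61 := by decide

lemma red27 : ∀ n, lucas n % 27 = dg K27 (n % 72) :=
  lucas_mod_reduce 27 K27 72 (by norm_num) (by decide) (by decide) dg_rec27
    (by decide) (by decide)
lemma red107 : ∀ n, lucas n % 107 = dg K107 (n % 72) :=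
  lucas_mod_reduce 107 K107 72 (by norm_num) (by decide) (by decide) dg_rec107
    (by decide) (by decide)
lemma red41 : ∀ n, lucas n % 41 = dg K41 (n % 360) :=
  lucas_mod_reduce 41 K41 360 (by norm_num) (by decide) (by decide) dg_rec41
    (by decide) (by decide)
lemma red61 : ∀ n, lucas n % 61 = dg K61 (n % 360) :=
  lucas_mod_reduce 61 K61 360 (by norm_num) (by decide) (by decide) dg_rec61
    (by decide) (by decide)

/-- Powers of three mod 107 all have their bit set in the mask `M107`. -/
lemma m107_spec : ∀ t < 53, bit M107 (3 ^ t % 107) = true := by decide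

def c27b (i j : ℕ) : Bool := (dg K27 i + dg K27 j) % 27 == 0
def c107b (i j : ℕ) : Bool := bit M107 ((dg K107 i + dg K107 j) % 107)
def c41b (N M e : ℕ) : Bool := (dg K41 N + dg K41 M) % 41 == 3 ^ e % 41
def c61b (N M e : ℕ) : Bool := (dg K61 N + dg K61 M) % 61 == 3 ^ e % 61

def chk1 : Bool :=
  allB (fun i => allB (fun j =>
    !(c27b i j && c107b i j) || bit SM (72 * i + j)) 72) 72

def chk2 : Bool :=
  allB (fun i => allB (fun j =>
    !bit SM (72 * i + j) ||
      allB (fun u => allB (fun v =>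
        allB (fun e8 =>
          !c41b (i + 72 * u) (j + 72 * v) e8 ||
            allB (fun k => !c61b (i + 72 * u) (j + 72 * v) (e8 + 8 * k)) 5) 8) 5) 5) 72) 72

lemma chk1_eq : chk1 = true := by decide
lemma chk2_eq : chk2 = true := by decide

lemma lucas_pos : ∀ n, 1 ≤ lucas n := by
  intro n
  induction n using Nat.strong_induction_on with
  | _ n ih =>
    match n with
    | 0 => decide
    | 1 => decide
    | (j + 2) =>
      have := ih (j + 1) (by omega)
      have l2 : lucas (j + 2) = lucas (j + 1) + lucas j := by simp [lucas]
      omega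

lemma lucas_big : ∀ k, 11 ≤ lucas (k + 5) := by
  intro k
  induction k with
  | zero => decide
  | succ t ih =>
    have l2 : lucas (t + 6) = lucas (t + 5) + lucas (t + 4) := by
      simp [show t + 6 = (t + 4) + 2 by omega, lucas]
    show 11 ≤ lucas (t + 6)
    omega

/-- The main sieve: no solutions with `a ≥ 3`. -/
lemma no_big_sol (n m a : ℕ) (ha : 3 ≤ a) (heq : lucas n + lucas m = 3 ^ a) : False := by
  set i := n % 72 with hi
  set j := m % 72 with hj
  set N := n % 360 with hN
  set M := m % 360 with hM
  have hi72 : i < 72 := Nat.mod_lt _ (by norm_num)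
  have hj72 : j < 72 := Nat.mod_lt _ (by norm_num)
  -- c27b i j = true
  have hdvd : 3 ^ a % 27 = 0 := by
    have h3 : (27 : ℕ) ∣ 3 ^ a := by
      have := pow_dvd_pow 3 ha
      simpa using this
    omega
  have h27 : c27b i j = true := by
    have : (dg K27 i + dg K27 j) % 27 = 0 := by
      rw [← red27 n, ← red27 m, ← Nat.add_mod, heq, hdvd]
    simpa [c27b]
  -- c107b i j = true
  have h107 : c107b i j = true := by
    have hv : (dg K107 i + dg K107 j) % 107 = 3 ^ (a % 53) % 107 := by
      rw [← red107 n, ← red107 m, ← Nat.add_mod, heq,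
        pow_mod_red 107 53 (by decide) (by norm_num) a]
    have := m107_spec (a % 53) (Nat.mod_lt _ (by norm_num))
    simpa [c107b, hv]
  -- stage 1 gives the survivor bit
  have hbit : bit SM (72 * i + j) = true := by
    have h1 := allB_spec _ 72 chk1_eq i hi72
    have h2 := allB_spec _ 72 h1 j hj72
    simp only [Bool.or_eq_true, Bool.not_eq_true', Bool.and_eq_true] at h2
    rcases h2 with h2 | h2
    · rw [Bool.and_eq_false_iff] at h2
      rcases h2 with h2 | h2 <;> simp [h2] at h27 h107
    · exact h2
  -- stage 2
  have hu : N = i + 72 * (N / 72) := by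
    have : N % 72 = i := by
      rw [hN, hi, Nat.mod_mod_of_dvd n (by norm_num)]
    omega
  have hv : M = j + 72 * (M / 72) := by
    have : M % 72 = j := by
      rw [hM, hj, Nat.mod_mod_of_dvd m (by norm_num)]
    omega
  have hulb : N / 72 < 5 := by
    have : N < 360 := Nat.mod_lt _ (by norm_num)
    omega
  have hvlb : M / 72 < 5 := by
    have : M < 360 := Nat.mod_lt _ (by norm_num)
    omega
  have s1 := allB_spec _ 72 chk2_eq i hi72
  have s2 := allB_spec _ 72 s1 j hj72
  simp only [Bool.or_eq_true, Bool.not_eq_true'] at s2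
  rcases s2 with s2 | s2
  · rw [s2] at hbit; exact Bool.false_ne_true hbit
  have s3 := allB_spec _ 5 s2 (N / 72) hulb
  have s4 := allB_spec _ 5 s3 (M / 72) hvlb
  have e8lt : a % 40 % 8 < 8 := Nat.mod_lt _ (by norm_num)
  have s5 := allB_spec _ 8 s4 (a % 40 % 8) e8lt
  have hNM41 : (dg K41 (i + 72 * (N / 72)) + dg K41 (j + 72 * (M / 72))) % 41
      = 3 ^ (a % 40 % 8) % 41 := by
    rw [← hu, ← hv, ← red41 n, ← red41 m, ← Nat.add_mod, heq]
    have h8 : a % 40 % 8 = a % 8 := Nat.mod_mod_of_dvd a (by norm_num)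
    rw [h8, pow_mod_red 41 8 (by decide) (by norm_num) a]
  have hc41 : c41b (i + 72 * (N / 72)) (j + 72 * (M / 72)) (a % 40 % 8) = true := by
    simpa [c41b] using hNM41
  simp only [Bool.or_eq_true, Bool.not_eq_true'] at s5
  rcases s5 with s5 | s5
  · rw [s5] at hc41; exact Bool.false_ne_true hc41
  have hklt : a % 40 / 8 < 5 := by omega
  have s6 := allB_spec _ 5 s5 (a % 40 / 8) hklt
  rw [Bool.not_eq_true'] at s6
  have hce : a % 40 % 8 + 8 * (a % 40 / 8) = a % 40 := by omega
  have hNM61 : (dg K61 (i + 72 * (N / 72)) + dg K61 (j + 72 * (M / 72))) % 61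
      = 3 ^ (a % 40 % 8 + 8 * (a % 40 / 8)) % 61 := by
    rw [← hu, ← hv, ← red61 n, ← red61 m, ← Nat.add_mod, heq, hce,
      pow_mod_red 61 40 (by decide) (by norm_num) a]
  have hc61 : c61b (i + 72 * (N / 72)) (j + 72 * (M / 72)) (a % 40 % 8 + 8 * (a % 40 / 8))
      = true := by
    simpa [c61b] using hNM61
  rw [s6] at hc61
  exact Bool.false_ne_true hc61

/-- The only solutions `(n, m, a)` in nonnegative integers with `n ≥ m` of the
exponential Diophantine equation `L n + L m = 3 ^ a` are `(1, 0, 1)` and `(4, 0, 2)`. -/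
theorem lucas_sum_eq_pow_three (n m a : ℕ) (h : m ≤ n) :
    lucas n + lucas m = 3 ^ a ↔
      (n = 1 ∧ m = 0 ∧ a = 1) ∨ (n = 4 ∧ m = 0 ∧ a = 2) := by
  constructor
  · intro heq
    have ha2 : a ≤ 2 := by
      by_contra hc
      exact no_big_sol n m a (by omega) heq
    have hn4 : n ≤ 4 := by
      by_contra hn
      push_neg at hn
      have h11 : 11 ≤ lucas n := by
        have := lucas_big (n - 5)
        rwa [show n - 5 + 5 = n by omega] at this
      have hpow : 3 ^ a ≤ 9 := by
        calc 3 ^ a ≤ 3 ^ 2 := Nat.pow_le_pow_right (by norm_num) ha2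
        _ = 9 := by norm_num
      have := lucas_pos m
      omega
    interval_cases n <;> interval_cases m <;> interval_cases a <;>
      revert heq <;> decide
  · rintro (⟨rfl, rfl, rfl⟩ | ⟨rfl, rfl, rfl⟩) <;> decide
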